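/- Let G be an r-regular graph with star set X for a non-main eigenvalue μ such that G - X = K_s ∇ tK_1 (s,t ≥ 2). For u ∈ X with a = |N_{K_s}(u)| and b = |N_{tK_1}(u)|, the identity ⟨b_u, b_u⟩ = μ expands to: μ·m(μ) = α a² + βμa + 2δab + γb² + β(μ+1)b, where m(μ) = μ(μ+1)(μ²-(s-1)μ-st), α = μ²+μt, β = μ²-(s-1)μ-st, γ = sμ+s, δ = μ²+μ. Equivalently, μ⁵ + (2-s)μ⁴ + (1-b-s-st-a)μ³ + (as-2b-2ab+bs-st-a²-a)μ² + (bs-2ab-b-a²t-b²s+ast+bst)μ - sb² + stb = 0. -/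

import Mathlib

open Matrix

open scoped Classical

noncomputable section

variable {V : Type*} [Fintype V] [DecidableEq V]

/-- The real adjacency matrix of a graph. -/
def adjMat (G : SimpleGraph V) : Matrix V V ℝ :=
  letI := Classical.decRel G.Adj
  G.adjMatrix ℝ

/-- `μ` is an (adjacency) eigenvalue of `G`. -/
def IsEigen (G : SimpleGraph V) (μ : ℝ) : Prop :=
  Module.End.HasEigenvalue (Matrix.toLin' (adjMat G)) μ

/-- The multiplicity of `μ` as an eigenvalue of `G`. -/
def eigMult (G : SimpleGraph V) (μ : ℝ) : ℕ :=
  Module.finrank ℝ (Module.End.eigenspace (Matrix.toLin' (adjMat G)) μ)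

/-- `X` is a star set for `μ` in `G`: `|X|` equals the multiplicity of `μ` and `μ` is
not an eigenvalue of `G - X`. -/
def IsStarSet (G : SimpleGraph V) (μ : ℝ) (X : Finset V) : Prop :=
  X.card = eigMult G μ ∧ ¬ IsEigen (G.induce ((↑X : Set V)ᶜ)) μ

/-- `μ` is a non-main eigenvalue: every `μ`-eigenvector is orthogonal to the
all-ones vector. -/
def IsNonMain (G : SimpleGraph V) (μ : ℝ) : Prop :=
  ∀ x : V → ℝ, (adjMat G).mulVec x = μ • x → x ⬝ᵥ (fun _ => 1) = 0

/-- The join `G ∇ H` of two graphs. -/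
def joinG {α β : Type*} (G : SimpleGraph α) (H : SimpleGraph β) : SimpleGraph (α ⊕ β) where
  Adj u v :=
    match u, v with
    | .inl a, .inl b => G.Adj a b
    | .inr a, .inr b => H.Adj a b
    | _, _ => True
  symm := ⟨by rintro (a | a) (b | b) h <;> simp_all <;> exact h.symm⟩
  loopless := ⟨by
    rintro (a | a) h
    · exact G.loopless.irrefl _ h
    · exact H.loopless.irrefl _ h⟩

/-- The perfect matching graph `nK_2` on `Fin n × Fin 2`. -/
def matchingG (n : ℕ) : SimpleGraph (Fin n × Fin 2) where
  Adj u v := u.1 = v.1 ∧ u.2 ≠ v.2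
  symm := ⟨by rintro ⟨i, a⟩ ⟨j, b⟩ ⟨h1, h2⟩; exact ⟨h1.symm, h2.symm⟩⟩
  loopless := ⟨by rintro ⟨i, a⟩ ⟨_, h⟩; exact h rfl⟩


lemma sum_ite_ne' {n : Type*} [Fintype n] [DecidableEq n] (b : n) (f : n → ℝ) :
    ∑ x, (if b = x then 0 else f x) = (∑ x, f x) - f b := by
  rw [Finset.sum_congr rfl (fun x _ => (by split <;> ring :
      (if b = x then (0:ℝ) else f x) = f x - (if b = x then f x else 0))),
    Finset.sum_sub_distrib, Finset.sum_ite_eq Finset.univ b f]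
  simp

/-- Eq. (3): in an `r`-regular graph `G` with star set `X` for a non-main eigenvalue
`μ` and star complement `K_s ∇ tK_1`, for each `u ∈ X` with `a = |N_{K_s}(u)|` and
`b = |N_{tK_1}(u)|`, the identity `⟨b_u,b_u⟩ = μ` expands to
`μ·m(μ) = αa² + βμa + 2δab + γb² + β(μ+1)b`, equivalently the quintic equation. -/
theorem quintic_relation {α : Type*} [Fintype α] [DecidableEq α] (s t : ℕ)
    (hs : 2 ≤ s) (ht : 2 ≤ t) (r : ℕ) (G : SimpleGraph (α ⊕ (Fin s ⊕ Fin t)))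
    (hreg : G.IsRegularOfDegree r) (μ : ℝ) (hμ : IsEigen G μ) (hnm : IsNonMain G μ)
    (X : Finset (α ⊕ (Fin s ⊕ Fin t)))
    (hX : X = Finset.univ.map ⟨Sum.inl, Sum.inl_injective⟩)
    (hstar : IsStarSet G μ X)
    (hH : ∀ i j, G.Adj (Sum.inr i) (Sum.inr j) ↔
      (joinG (⊤ : SimpleGraph (Fin s)) (⊥ : SimpleGraph (Fin t))).Adj i j)
    (a b : α → ℕ)
    (ha : ∀ u, a u = (Finset.univ.filter
      (fun i : Fin s => G.Adj (Sum.inl u) (Sum.inr (Sum.inl i)))).card)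
    (hb : ∀ u, b u = (Finset.univ.filter
      (fun i : Fin t => G.Adj (Sum.inl u) (Sum.inr (Sum.inr i)))).card) :
    ∀ u : α,
      (μ * (μ * (μ + 1) * (μ ^ 2 - ((s : ℝ) - 1) * μ - s * t)) =
        (μ ^ 2 + μ * t) * (a u) ^ 2
          + (μ ^ 2 - ((s : ℝ) - 1) * μ - s * t) * μ * (a u)
          + 2 * (μ ^ 2 + μ) * (a u) * (b u)
          + ((s : ℝ) * μ + s) * (b u) ^ 2
          + (μ ^ 2 - ((s : ℝ) - 1) * μ - s * t) * (μ + 1) * (b u)) ∧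
      (μ ^ 5 + (2 - (s : ℝ)) * μ ^ 4 + (1 - (b u) - s - s * t - (a u)) * μ ^ 3
        + ((a u) * s - 2 * (b u) - 2 * (a u) * (b u) + (b u) * s - s * t
            - (a u : ℝ) ^ 2 - (a u)) * μ ^ 2
        + ((b u) * s - 2 * (a u) * (b u) - (b u) - (a u : ℝ) ^ 2 * t
            - (b u : ℝ) ^ 2 * s + (a u) * s * t + (b u) * s * t) * μ
        - s * (b u : ℝ) ^ 2 + s * t * (b u) = 0) := by
  intro u
  have hAe : ∀ v w, adjMat G v w = if G.Adj v w then 1 else 0 := fun v w => by simp [adjMat]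
  -- the star complement adjacency matrix
  set C : Matrix (Fin s ⊕ Fin t) (Fin s ⊕ Fin t) ℝ :=
    fun i j => adjMat G (.inr i) (.inr j) with hCdef
  -- μ is not an eigenvalue of the star complement
  have hinX : ∀ u' : α, (Sum.inl u' : α ⊕ (Fin s ⊕ Fin t)) ∈ X := by
    intro u'; simp [hX]
  have hnotX : ∀ q : Fin s ⊕ Fin t,
      (Sum.inr q : α ⊕ (Fin s ⊕ Fin t)) ∈ ((↑X : Set (α ⊕ (Fin s ⊕ Fin t)))ᶜ) := by
    intro q; simp [hX]
  let e : (Fin s ⊕ Fin t) ≃ ((↑X : Set (α ⊕ (Fin s ⊕ Fin t)))ᶜ : Set _) :=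
    Equiv.ofBijective (fun q => ⟨Sum.inr q, hnotX q⟩)
      ⟨fun q1 q2 h => by simpa using h, by
        rintro ⟨(u' | q), hv⟩
        · exact absurd (hinX u') (by simpa using hv)
        · exact ⟨q, rfl⟩⟩
  have hC : ∀ y : (Fin s ⊕ Fin t) → ℝ, C.mulVec y = μ • y → y = 0 := by
    intro y hy
    by_contra hy0
    apply hstar.2
    refine Module.End.hasEigenvalue_of_hasEigenvector
      (x := fun v => y (e.symm v)) ⟨?_, ?_⟩
    · rw [Module.End.mem_eigenspace_iff, Matrix.toLin'_apply]
      funext v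
      obtain ⟨q, rfl⟩ := e.surjective v
      have hq : e.symm (e q) = q := e.symm_apply_apply q
      show ∑ v', adjMat (G.induce _) (e q) v' * y (e.symm v') = _
      rw [← Equiv.sum_comp e (fun v' => adjMat (G.induce _) (e q) v' * y (e.symm v'))]
      simp only [e.symm_apply_apply]
      have hent : ∀ q' : Fin s ⊕ Fin t,
          adjMat (G.induce ((↑X : Set (α ⊕ (Fin s ⊕ Fin t)))ᶜ)) (e q) (e q') = C q q' := by
        intro q'
        have h1 : adjMat (G.induce ((↑X : Set (α ⊕ (Fin s ⊕ Fin t)))ᶜ)) (e q) (e q')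
            = if (G.induce ((↑X : Set (α ⊕ (Fin s ⊕ Fin t)))ᶜ)).Adj (e q) (e q')
              then 1 else 0 := by
          simp [adjMat]
        rw [h1]
        show _ = adjMat G (Sum.inr q) (Sum.inr q')
        rw [hAe]
        exact if_congr Iff.rfl rfl rfl
      simp only [hent]
      have h2 := congrFun hy q
      simpa [Matrix.mulVec, dotProduct, hq] using h2
    · intro h0
      apply hy0
      funext q
      have := congrFun h0 (e q)
      simpa using this
  -- the eigenspace and projection to the star set coordinates
  set E := Module.End.eigenspace (Matrix.toLin' (adjMat G)) μ with hEdef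
  have hcard : Module.finrank ℝ E = Fintype.card α := by
    have h := hstar.1
    rw [hX] at h
    simpa [eigMult, hEdef] using h.symm
  let Pr : E →ₗ[ℝ] (α → ℝ) := (LinearMap.funLeft ℝ ℝ Sum.inl).comp E.subtype
  have hinj : Function.Injective Pr := by
    rw [← LinearMap.ker_eq_bot, Submodule.eq_bot_iff]
    rintro ⟨z, hzE⟩ hker
    have hz' : (adjMat G).mulVec z = μ • z := by
      rw [← Matrix.toLin'_apply]
      exact Module.End.mem_eigenspace_iff.mp hzE
    have h0 : ∀ u', z (Sum.inl u') = 0 := by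
      intro u'
      have : (z ∘ Sum.inl : α → ℝ) = 0 := hker
      exact congrFun this u'
    have hzr : (fun q => z (Sum.inr q)) = (0 : (Fin s ⊕ Fin t) → ℝ) := by
      apply hC
      funext q
      have h := congrFun hz' (Sum.inr q)
      simp only [Matrix.mulVec, dotProduct, Fintype.sum_sum_type, h0, mul_zero, zero_mul,
        Finset.sum_const_zero, zero_add, Pi.smul_apply, smul_eq_mul] at h
      simpa [Matrix.mulVec, dotProduct, hCdef] using h
    refine Subtype.ext (funext ?_)
    rintro (u' | q)
    · exact h0 u'
    · exact congrFun hzr q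
  have hsurj : Function.Surjective Pr := by
    rw [← LinearMap.range_eq_top]
    apply Submodule.eq_top_of_finrank_eq
    rw [LinearMap.finrank_range_of_inj hinj, hcard, Module.finrank_pi]
  obtain ⟨⟨z, hzE⟩, hzu⟩ := hsurj (Pi.single u 1)
  have hz : (adjMat G).mulVec z = μ • z := by
    rw [← Matrix.toLin'_apply]
    exact Module.End.mem_eigenspace_iff.mp hzE
  have hl : ∀ u', z (Sum.inl u') = if u' = u then 1 else 0 := by
    intro u'
    have : (z ∘ Sum.inl : α → ℝ) = Pi.single u 1 := hzu
    rw [show z (Sum.inl u') = (z ∘ Sum.inl) u' from rfl, this, Pi.single_apply]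
  -- notation
  set P : ℝ := ∑ i : Fin s, z (Sum.inr (Sum.inl i)) with hPdef
  set Q : ℝ := ∑ j : Fin t, z (Sum.inr (Sum.inr j)) with hQdef
  set Sa : ℝ := ∑ i : Fin s,
    (if G.Adj (.inl u) (.inr (.inl i)) then (1:ℝ) else 0) * z (Sum.inr (Sum.inl i)) with hSadef
  set Sb : ℝ := ∑ j : Fin t,
    (if G.Adj (.inl u) (.inr (.inr j)) then (1:ℝ) else 0) * z (Sum.inr (Sum.inr j)) with hSbdef
  -- entry computations
  have hA_ss : ∀ (i i' : Fin s),
      adjMat G (.inr (.inl i)) (.inr (.inl i')) = if i = i' then 0 else 1 := by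
    intro i i'
    rcases eq_or_ne i i' with h | h <;> simp [hAe, hH, joinG, h]
  have hA_st : ∀ (i : Fin s) (j : Fin t),
      adjMat G (.inr (.inl i)) (.inr (.inr j)) = 1 := by
    intro i j; simp [hAe, hH, joinG]
  have hA_ts : ∀ (j : Fin t) (i : Fin s),
      adjMat G (.inr (.inr j)) (.inr (.inl i)) = 1 := by
    intro j i; simp [hAe, hH, joinG]
  have hA_tt : ∀ (j j' : Fin t),
      adjMat G (.inr (.inr j)) (.inr (.inr j')) = 0 := by
    intro j j'; simp [hAe, hH, joinG]
  have hA_su : ∀ (i : Fin s) (u' : α),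
      adjMat G (.inr (.inl i)) (.inl u') = if G.Adj (.inl u') (.inr (.inl i)) then 1 else 0 := by
    intro i u'; rw [hAe]; exact if_congr (G.adj_comm _ _) rfl rfl
  have hA_tu : ∀ (j : Fin t) (u' : α),
      adjMat G (.inr (.inr j)) (.inl u') = if G.Adj (.inl u') (.inr (.inr j)) then 1 else 0 := by
    intro j u'; rw [hAe]; exact if_congr (G.adj_comm _ _) rfl rfl
  have hfirst : ∀ v, (∑ u' : α, adjMat G v (Sum.inl u') * z (Sum.inl u'))
      = adjMat G v (Sum.inl u) := by
    intro v
    simp [hl, mul_ite, mul_one, mul_zero, Finset.sum_ite_eq']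
  -- the eigen-equations at the three kinds of vertices
  have eqs : ∀ i : Fin s, (μ + 1) * z (Sum.inr (Sum.inl i))
      = (if G.Adj (.inl u) (.inr (.inl i)) then (1:ℝ) else 0) + P + Q := by
    intro i
    have h := congrFun hz (Sum.inr (Sum.inl i))
    simp only [Matrix.mulVec, dotProduct, Fintype.sum_sum_type, Pi.smul_apply,
      smul_eq_mul] at h
    rw [hfirst (Sum.inr (Sum.inl i)), hA_su i u] at h
    simp only [hA_ss, hA_st, ite_mul, zero_mul, one_mul] at h
    rw [sum_ite_ne' i (fun i' => z (Sum.inr (Sum.inl i')))] at h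
    rw [← hPdef, ← hQdef] at h
    linear_combination -h
  have eqt : ∀ j : Fin t, μ * z (Sum.inr (Sum.inr j))
      = (if G.Adj (.inl u) (.inr (.inr j)) then (1:ℝ) else 0) + P := by
    intro j
    have h := congrFun hz (Sum.inr (Sum.inr j))
    simp only [Matrix.mulVec, dotProduct, Fintype.sum_sum_type, Pi.smul_apply,
      smul_eq_mul] at h
    rw [hfirst (Sum.inr (Sum.inr j)), hA_tu j u] at h
    simp only [hA_ts, hA_tt, ite_mul, zero_mul, one_mul, Finset.sum_const_zero] at h
    rw [← hPdef] at h
    linear_combination -h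
  have equ : μ = Sa + Sb := by
    have h := congrFun hz (Sum.inl u)
    simp only [Matrix.mulVec, dotProduct, Fintype.sum_sum_type, Pi.smul_apply,
      smul_eq_mul] at h
    rw [hfirst (Sum.inl u)] at h
    simp only [hAe, SimpleGraph.irrefl, if_false, hl, eq_self_iff_true, if_true] at h
    rw [← hSadef, ← hSbdef] at h
    linear_combination -h
  -- summed equations
  have hsa : ∑ i : Fin s, (if G.Adj (.inl u) (.inr (.inl i)) then (1:ℝ) else 0)
      = (a u : ℝ) := by
    rw [Finset.sum_boole, ha u]
  have hsb : ∑ j : Fin t, (if G.Adj (.inl u) (.inr (.inr j)) then (1:ℝ) else 0)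
      = (b u : ℝ) := by
    rw [Finset.sum_boole, hb u]
  have h1 : (μ + 1) * P = (a u : ℝ) + s * (P + Q) := by
    calc (μ + 1) * P = ∑ i : Fin s, (μ + 1) * z (Sum.inr (Sum.inl i)) := by
          rw [hPdef, Finset.mul_sum]
      _ = ∑ i : Fin s, ((if G.Adj (.inl u) (.inr (.inl i)) then (1:ℝ) else 0) + P + Q) :=
          Finset.sum_congr rfl fun i _ => eqs i
      _ = (a u : ℝ) + s * (P + Q) := by
          rw [Finset.sum_add_distrib, Finset.sum_add_distrib, hsa]
          simp only [Finset.sum_const, Finset.card_univ, Fintype.card_fin, nsmul_eq_mul]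
          ring
  have h2 : μ * Q = (b u : ℝ) + t * P := by
    calc μ * Q = ∑ j : Fin t, μ * z (Sum.inr (Sum.inr j)) := by
          rw [hQdef, Finset.mul_sum]
      _ = ∑ j : Fin t, ((if G.Adj (.inl u) (.inr (.inr j)) then (1:ℝ) else 0) + P) :=
          Finset.sum_congr rfl fun j _ => eqt j
      _ = (b u : ℝ) + t * P := by
          rw [Finset.sum_add_distrib, hsb]
          simp only [Finset.sum_const, Finset.card_univ, Fintype.card_fin, nsmul_eq_mul]
  have h3 : (μ + 1) * Sa = (a u : ℝ) * (1 + P + Q) := by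
    have hpt : ∀ i : Fin s,
        (if G.Adj (.inl u) (.inr (.inl i)) then (1:ℝ) else 0) * ((μ + 1) * z (Sum.inr (Sum.inl i)))
        = (if G.Adj (.inl u) (.inr (.inl i)) then (1:ℝ) else 0) * (1 + P + Q) := by
      intro i
      by_cases hadj : G.Adj (.inl u) (.inr (.inl i))
      · rw [eqs i]; simp [hadj]
      · simp [hadj]
    calc (μ + 1) * Sa
        = ∑ i : Fin s, (if G.Adj (.inl u) (.inr (.inl i)) then (1:ℝ) else 0)
            * ((μ + 1) * z (Sum.inr (Sum.inl i))) := by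
          rw [hSadef, Finset.mul_sum]
          exact Finset.sum_congr rfl fun i _ => by ring
      _ = ∑ i : Fin s, (if G.Adj (.inl u) (.inr (.inl i)) then (1:ℝ) else 0) * (1 + P + Q) :=
          Finset.sum_congr rfl fun i _ => hpt i
      _ = (a u : ℝ) * (1 + P + Q) := by rw [← Finset.sum_mul, hsa]
  have h4 : μ * Sb = (b u : ℝ) * (1 + P) := by
    have hpt : ∀ j : Fin t,
        (if G.Adj (.inl u) (.inr (.inr j)) then (1:ℝ) else 0) * (μ * z (Sum.inr (Sum.inr j)))
        = (if G.Adj (.inl u) (.inr (.inr j)) then (1:ℝ) else 0) * (1 + P) := by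
      intro j
      by_cases hadj : G.Adj (.inl u) (.inr (.inr j))
      · rw [eqt j]; simp [hadj]
      · simp [hadj]
    calc μ * Sb
        = ∑ j : Fin t, (if G.Adj (.inl u) (.inr (.inr j)) then (1:ℝ) else 0)
            * (μ * z (Sum.inr (Sum.inr j))) := by
          rw [hSbdef, Finset.mul_sum]
          exact Finset.sum_congr rfl fun j _ => by ring
      _ = ∑ j : Fin t, (if G.Adj (.inl u) (.inr (.inr j)) then (1:ℝ) else 0) * (1 + P) :=
          Finset.sum_congr rfl fun j _ => hpt j
      _ = (b u : ℝ) * (1 + P) := by rw [← Finset.sum_mul, hsb]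
  -- final algebra
  have g1 : μ * (μ * (μ + 1) * (μ ^ 2 - ((s : ℝ) - 1) * μ - s * t)) =
      (μ ^ 2 + μ * t) * (a u) ^ 2
        + (μ ^ 2 - ((s : ℝ) - 1) * μ - s * t) * μ * (a u)
        + 2 * (μ ^ 2 + μ) * (a u) * (b u)
        + ((s : ℝ) * μ + s) * (b u) ^ 2
        + (μ ^ 2 - ((s : ℝ) - 1) * μ - s * t) * (μ + 1) * (b u) := by
    linear_combination (μ * (μ + 1) * (μ ^ 2 - ((s : ℝ) - 1) * μ - s * t)) * equ
      + (μ * (μ ^ 2 - ((s : ℝ) - 1) * μ - s * t)) * h3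
      + ((μ + 1) * (μ ^ 2 - ((s : ℝ) - 1) * μ - s * t)) * h4
      + (μ * ((a u : ℝ) * μ + (b u : ℝ) * μ + (b u : ℝ) + (a u : ℝ) * t)) * h1
      + (((a u : ℝ) * μ + (μ + 1) * (b u : ℝ)) * s
          + (a u : ℝ) * ((μ ^ 2 - ((s : ℝ) - 1) * μ - s * t) + t * s)) * h2
  exact ⟨g1, by linear_combination g1⟩


end
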